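/- Let t < T and let Y, L, U : [t,T] → ℝ be continuous with L(s) ≤ Y(s) ≤ U(s) and U(s) - L(s) > 0 for all s ∈ [t,T]. Let K⁺, K⁻, K̂⁺, K̂⁻ : [t,T] → ℝ be continuous nondecreasing functions vanishing at t, satisfying: (i) K⁺(s) - K⁻(s) = K̂⁺(s) - K̂⁻(s) for all s ∈ [t,T]; (ii) the Skorokhod minimality conditions ∫_t^T (Y(s) - L(s)) dK⁺(s) = 0, ∫_t^T (U(s) - Y(s)) dK⁻(s) = 0, and the same two conditions with K̂⁺, K̂⁻ in place of K⁺, K⁻ (Lebesgue–Stieltjes integrals). Then K⁺ = K̂⁺ and K⁻ = K̂⁻ on [t,T]. -/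

import Mathlib

open MeasureTheory Set

/-- Uniqueness of the reflecting increasing processes for a doubly reflected
path with completely separated barriers: the Skorokhod minimality conditions
and equality of the differences `K⁺ - K⁻ = K̂⁺ - K̂⁻` force `K⁺ = K̂⁺` and
`K⁻ = K̂⁻` on `[t,T]`. -/

lemma sk_null_of_integral_zero (t T : ℝ) (f : ℝ → ℝ) (μ : Measure ℝ)
    [IsLocallyFiniteMeasure μ] (hf : ContinuousOn f (Icc t T))
    (hnn : ∀ x ∈ Icc t T, 0 ≤ f x)
    (h : ∫ x in Icc t T, f x ∂μ = 0) : μ ({x | f x ≠ 0} ∩ Icc t T) = 0 := by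
  have hint : IntegrableOn f (Icc t T) μ := hf.integrableOn_compact isCompact_Icc
  have h0 : 0 ≤ᵐ[μ.restrict (Icc t T)] f :=
    (ae_restrict_iff' measurableSet_Icc).2 (ae_of_all _ hnn)
  have hz : f =ᵐ[μ.restrict (Icc t T)] 0 :=
    (integral_eq_zero_iff_of_nonneg_ae h0 hint).1 h
  have h2 : μ.restrict (Icc t T) {x | f x ≠ 0} = 0 := ae_iff.1 hz
  rwa [Measure.restrict_apply' measurableSet_Icc] at h2

lemma sk_leftLim_eq (f : StieltjesFunction ℝ) (hf : Continuous f) (x : ℝ) :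
    Function.leftLim f x = f x :=
  f.mono.continuousWithinAt_Iio_iff_leftLim_eq.1 hf.continuousWithinAt

theorem skorokhod_uniqueness (t T : ℝ) (htT : t < T)
    (Y L U : ℝ → ℝ)
    (hY : ContinuousOn Y (Icc t T)) (hL : ContinuousOn L (Icc t T))
    (hU : ContinuousOn U (Icc t T))
    (hLY : ∀ s ∈ Icc t T, L s ≤ Y s) (hYU : ∀ s ∈ Icc t T, Y s ≤ U s)
    (hsep : ∀ s ∈ Icc t T, 0 < U s - L s)
    (Kp Km Khp Khm : StieltjesFunction ℝ)
    (hKpc : Continuous Kp) (hKmc : Continuous Km)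
    (hKhpc : Continuous Khp) (hKhmc : Continuous Khm)
    (hKp0 : Kp t = 0) (hKm0 : Km t = 0) (hKhp0 : Khp t = 0) (hKhm0 : Khm t = 0)
    (hdiff : ∀ s ∈ Icc t T, Kp s - Km s = Khp s - Khm s)
    (hmin1 : ∫ s in Icc t T, (Y s - L s) ∂Kp.measure = 0)
    (hmin2 : ∫ s in Icc t T, (U s - Y s) ∂Km.measure = 0)
    (hmin3 : ∫ s in Icc t T, (Y s - L s) ∂Khp.measure = 0)
    (hmin4 : ∫ s in Icc t T, (U s - Y s) ∂Khm.measure = 0) :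
    ∀ s ∈ Icc t T, Kp s = Khp s ∧ Km s = Khm s := by
  -- null sets from minimality
  have null1 : Kp.measure ({x | Y x - L x ≠ 0} ∩ Icc t T) = 0 :=
    sk_null_of_integral_zero t T _ _ (hY.sub hL)
      (fun x hx => sub_nonneg.2 (hLY x hx)) hmin1
  have null3 : Khp.measure ({x | Y x - L x ≠ 0} ∩ Icc t T) = 0 :=
    sk_null_of_integral_zero t T _ _ (hY.sub hL)
      (fun x hx => sub_nonneg.2 (hLY x hx)) hmin3
  have null2 : Km.measure ({x | U x - Y x ≠ 0} ∩ Icc t T) = 0 :=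
    sk_null_of_integral_zero t T _ _ (hU.sub hY)
      (fun x hx => sub_nonneg.2 (hYU x hx)) hmin2
  have null4 : Khm.measure ({x | U x - Y x ≠ 0} ∩ Icc t T) = 0 :=
    sk_null_of_integral_zero t T _ _ (hU.sub hY)
      (fun x hx => sub_nonneg.2 (hYU x hx)) hmin4
  -- measure equality A = B
  have hfin : ∀ (f : StieltjesFunction ℝ),
      IsFiniteMeasure (f.measure.restrict (Icc t T)) := by
    intro f
    constructor
    rw [Measure.restrict_apply_univ]
    exact isCompact_Icc.measure_lt_top
  haveI := hfin Kp; haveI := hfin Km; haveI := hfin Khp; haveI := hfin Khm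
  have key : ∀ (f : StieltjesFunction ℝ), Continuous f → f t = 0 → ∀ x : ℝ,
      (f.measure.restrict (Icc t T)) (Iic x) = ENNReal.ofReal (f (min x T)) := by
    intro f hc h0 x
    rw [Measure.restrict_apply measurableSet_Iic]
    have : Iic x ∩ Icc t T = Icc t (min x T) := by
      ext y
      simp only [mem_inter_iff, mem_Iic, mem_Icc, le_min_iff]
      tauto
    rw [this, f.measure_Icc, sk_leftLim_eq f hc, h0, sub_zero]
  have hAB : Kp.measure.restrict (Icc t T) + Khm.measure.restrict (Icc t T)
      = Khp.measure.restrict (Icc t T) + Km.measure.restrict (Icc t T) := by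
    apply Measure.ext_of_Iic
    intro x
    simp only [Measure.add_apply, key Kp hKpc hKp0, key Khm hKhmc hKhm0,
      key Khp hKhpc hKhp0, key Km hKmc hKm0]
    set m := min x T with hm
    rcases le_or_gt t m with htm | hmt
    · have hmIcc : m ∈ Icc t T := ⟨htm, min_le_right _ _⟩
      have h1 : 0 ≤ Kp m := hKp0 ▸ Kp.mono htm
      have h2 : 0 ≤ Khm m := hKhm0 ▸ Khm.mono htm
      have h3 : 0 ≤ Khp m := hKhp0 ▸ Khp.mono htm
      have h4 : 0 ≤ Km m := hKm0 ▸ Km.mono htm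
      rw [← ENNReal.ofReal_add h1 h2, ← ENNReal.ofReal_add h3 h4]
      congr 1
      have := hdiff m hmIcc
      linarith
    · have h1 : Kp m ≤ 0 := hKp0 ▸ Kp.mono hmt.le
      have h2 : Khm m ≤ 0 := hKhm0 ▸ Khm.mono hmt.le
      have h3 : Khp m ≤ 0 := hKhp0 ▸ Khp.mono hmt.le
      have h4 : Km m ≤ 0 := hKm0 ▸ Km.mono hmt.le
      rw [ENNReal.ofReal_of_nonpos h1, ENNReal.ofReal_of_nonpos h2,
        ENNReal.ofReal_of_nonpos h3, ENNReal.ofReal_of_nonpos h4]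
  -- main argument
  intro s hs
  have hsub : Icc t s ⊆ Icc t T := Icc_subset_Icc le_rfl hs.2
  set E : Set ℝ := Icc t s ∩ {x | Y x - L x = 0} with hE
  have hEsub : E ⊆ Icc t T := fun x hx => hsub hx.1
  have hEint : E ∩ Icc t T = E := inter_eq_left.2 hEsub
  -- E has full measure in Icc t s for Kp and Khp
  have hfull : ∀ (f : StieltjesFunction ℝ),
      f.measure ({x | Y x - L x ≠ 0} ∩ Icc t T) = 0 →
      f.measure (Icc t s) = f.measure E := by
    intro f hnull
    refine le_antisymm ?_ (measure_mono inter_subset_left)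
    calc f.measure (Icc t s)
        ≤ f.measure E + f.measure (Icc t s \ {x | Y x - L x = 0}) :=
          measure_le_inter_add_diff _ _ _
      _ = f.measure E := by
          have hss : Icc t s \ {x | Y x - L x = 0} ⊆
              {x | Y x - L x ≠ 0} ∩ Icc t T := fun x hx => ⟨hx.2, hsub hx.1⟩
          have hd : f.measure (Icc t s \ {x | Y x - L x = 0}) = 0 :=
            measure_mono_null hss hnull
          rw [hd, add_zero]
  -- E is null for Km and Khm
  have hEnullUm : ∀ (f : StieltjesFunction ℝ),
      f.measure ({x | U x - Y x ≠ 0} ∩ Icc t T) = 0 → f.measure E = 0 := by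
    intro f hnull
    refine measure_mono_null ?_ hnull
    intro x hx
    have hxT : x ∈ Icc t T := hEsub hx
    have h1 : Y x - L x = 0 := hx.2
    have h2 : 0 < U x - L x := hsep x hxT
    refine ⟨?_, hxT⟩
    show U x - Y x ≠ 0
    intro h
    linarith
  have hABE := congrArg (fun μ : Measure ℝ => μ E) hAB
  simp only [Measure.add_apply, Measure.restrict_apply' measurableSet_Icc, hEint,
    hEnullUm Km null2, hEnullUm Khm null4, add_zero] at hABE
  have hKpKhp : Kp.measure (Icc t s) = Khp.measure (Icc t s) := by
    rw [hfull Kp null1, hfull Khp null3, hABE]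
  rw [Kp.measure_Icc, Khp.measure_Icc, sk_leftLim_eq Kp hKpc, sk_leftLim_eq Khp hKhpc,
    hKp0, hKhp0, sub_zero, sub_zero] at hKpKhp
  have h1 : 0 ≤ Kp s := hKp0 ▸ Kp.mono hs.1
  have h2 : 0 ≤ Khp s := hKhp0 ▸ Khp.mono hs.1
  have heq : Kp s = Khp s := by
    rwa [ENNReal.ofReal_eq_ofReal_iff h1 h2] at hKpKhp
  exact ⟨heq, by have := hdiff s hs; linarith⟩
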